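/- (Theorem 1 of the paper, noiseless concrete form.) Let U and U' be two random vectors in ℝⁿ (e.g., two linear transforms of the same input), each with joint density whose marginals are continuous and strictly positive, and let Z and Z' be obtained by applying to each component the CDF of that component. Under integrability of all the entropy integrands involved, I(U) ≤ I(U') if and only if h(Z) ≥ h(Z'). Hence minimizing the multi-information of the outputs over a family of transforms is equivalent to maximizing the differential entropy of the CDF-transformed outputs. -/

import Mathlib

open MeasureTheory Set

lemma entropy_cdf_transform_eq
    {Ω : Type*} [MeasurableSpace Ω] (μ : Measure Ω) [IsProbabilityMeasure μ]
    {n : ℕ} (U : Ω → Fin n → ℝ) (hU : Measurable U)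
    (f : (Fin n → ℝ) → ℝ) (hf_meas : Measurable f) (hf_nonneg : ∀ x, 0 ≤ f x)
    (hf : μ.map U = volume.withDensity (fun x => ENNReal.ofReal (f x)))
    (fm : Fin n → ℝ → ℝ) (hfm_cont : ∀ i, Continuous (fm i))
    (hfm_pos : ∀ i x, 0 < fm i x)
    (hfm : ∀ i, μ.map (fun ω => U ω i) =
      volume.withDensity (fun x => ENNReal.ofReal (fm i x)))
    (F : Fin n → ℝ → ℝ) (hF : ∀ i t, F i t = (μ {ω | U ω i ≤ t}).toReal)
    (g : (Fin n → ℝ) → ℝ) (hg_meas : Measurable g) (hg_nonneg : ∀ z, 0 ≤ g z)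
    (hg : μ.map (fun ω i => F i (U ω i)) =
      volume.withDensity (fun z => ENNReal.ofReal (g z)))
    (h_int_f : Integrable (fun u => f u * Real.log (f u)))
    (h_int_fm : ∀ i, Integrable (fun x => fm i x * Real.log (fm i x)))
    (h_int_g : Integrable (fun z => g z * Real.log (g z))) :
    ∫ z, g z * Real.log (g z) =
      (∫ u, f u * Real.log (f u)) - ∑ i, ∫ x, fm i x * Real.log (fm i x) := by
  -- measurability of the components of U
  have hUi : ∀ i, Measurable fun ω => U ω i := fun i => (measurable_pi_apply i).comp hU
  -- the marginal measure as pushforward of the joint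
  have hmap_i : ∀ i, μ.map (fun ω => U ω i) = (μ.map U).map (fun u => u i) := by
    intro i
    rw [Measure.map_map (measurable_pi_apply i) hU]
    rfl
  -- each `fm i` is integrable with total integral corresponding to a probability measure
  have hprob_i : ∀ i, IsProbabilityMeasure (μ.map fun ω => U ω i) := fun i =>
    Measure.isProbabilityMeasure_map (hUi i).aemeasurable
  have hlin : ∀ i, ∫⁻ x, ENNReal.ofReal (fm i x) = 1 := by
    intro i
    have h1 : (volume.withDensity fun x => ENNReal.ofReal (fm i x)) univ = 1 := by
      rw [← hfm i]; exact measure_univ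
    rwa [withDensity_apply _ MeasurableSet.univ, setLIntegral_univ] at h1
  have hfm_int : ∀ i, Integrable (fm i) := by
    intro i
    refine ⟨(hfm_cont i).aestronglyMeasurable, ?_⟩
    rw [hasFiniteIntegral_iff_ofReal (Filter.Eventually.of_forall fun x => (hfm_pos i x).le),
      hlin i]
    exact ENNReal.one_lt_top
  -- the CDF as an integral of the density
  have hFeq : ∀ i t, F i t = ∫ x in Iic t, fm i x := by
    intro i t
    have h1 : {ω | U ω i ≤ t} = (fun ω => U ω i) ⁻¹' (Iic t) := rfl
    rw [hF, h1, ← Measure.map_apply (hUi i) measurableSet_Iic, hfm i,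
      withDensity_apply _ measurableSet_Iic,
      ← ofReal_integral_eq_lintegral_ofReal ((hfm_int i).restrict)
        (Filter.Eventually.of_forall fun x => (hfm_pos i x).le),
      ENNReal.toReal_ofReal]
    exact integral_nonneg fun x => (hfm_pos i x).le
  -- the CDF is differentiable with derivative `fm i`
  have hFderiv : ∀ i x, HasDerivAt (F i) (fm i x) x := by
    intro i x
    have h0 : ∀ t, F i t = F i 0 + ∫ s in (0:ℝ)..t, fm i s := by
      intro t
      rw [hFeq i t, hFeq i 0,
        ← intervalIntegral.integral_Iic_sub_Iic ((hfm_int i).integrableOn) ((hfm_int i).integrableOn)]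
      ring
    have h1 : HasDerivAt (fun t => F i 0 + ∫ s in (0:ℝ)..t, fm i s) (fm i x) x := by
      exact (intervalIntegral.integral_hasDerivAt_right
        ((hfm_int i).intervalIntegrable)
        ((hfm_cont i).stronglyMeasurableAtFilter _ _)
        (hfm_cont i).continuousAt).const_add (F i 0)
    exact h1.congr_of_eventuallyEq (Filter.Eventually.of_forall fun t => h0 t)
  have hFcont : ∀ i, Continuous (F i) :=
    fun i => continuous_iff_continuousAt.2 fun x => (hFderiv i x).continuousAt
  -- the CDF is strictly monotone
  have hFmono : ∀ i, StrictMono (F i) := by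
    intro i a b hab
    have hpos := intervalIntegral.intervalIntegral_pos_of_pos ((hfm_int i).intervalIntegrable)
      (fun x => hfm_pos i x) hab
    have := intervalIntegral.integral_Iic_sub_Iic ((hfm_int i).integrableOn (s := Iic a))
      ((hfm_int i).integrableOn (s := Iic b))
    rw [hFeq i a, hFeq i b]
    linarith
  -- the transform Φ
  set Φ : (Fin n → ℝ) → (Fin n → ℝ) := fun u i => F i (u i) with hΦdef
  have hΦcont : Continuous Φ := continuous_pi fun i => (hFcont i).comp (continuous_apply i)
  have hΦmeas : Measurable Φ := hΦcont.measurable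
  have hΦinj : Function.Injective Φ := fun u v h =>
    funext fun i => (hFmono i).injective (congrFun h i)
  have hemb : MeasurableEmbedding Φ := hΦmeas.measurableEmbedding hΦinj
  -- derivative of Φ
  set D : (Fin n → ℝ) → ((Fin n → ℝ) →L[ℝ] (Fin n → ℝ)) := fun u =>
    ContinuousLinearMap.pi (fun i => fm i (u i) • ContinuousLinearMap.proj i) with hDdef
  have hΦderiv : ∀ u, HasFDerivAt Φ (D u) u := by
    intro u
    apply hasFDerivAt_pi.2
    intro i
    exact (hFderiv i (u i)).comp_hasFDerivAt u (hasFDerivAt_apply i u)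
  have hw_pos : ∀ u : Fin n → ℝ, 0 < ∏ i, fm i (u i) := fun u =>
    Finset.prod_pos fun i _ => hfm_pos i (u i)
  have hdet : ∀ u, (D u).det = ∏ i, fm i (u i) := by
    intro u
    have hD : ((D u) : (Fin n → ℝ) →ₗ[ℝ] (Fin n → ℝ))
        = Matrix.toLin' (Matrix.diagonal fun i => fm i (u i)) := by
      apply LinearMap.ext
      intro v
      funext i
      simp [hDdef, Matrix.toLin'_apply, Matrix.mulVec_diagonal, mul_comm]
    rw [ContinuousLinearMap.det, hD, LinearMap.det_toLin', Matrix.det_diagonal]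
  -- the pushforward relation for Z
  have hZmeas : Measurable (fun ω i => F i (U ω i)) := hΦmeas.comp hU
  have hmapZ : (volume.withDensity fun z => ENNReal.ofReal (g z)) = (μ.map U).map Φ := by
    rw [← hg, Measure.map_map hΦmeas hU]
    rfl
  -- key identity : (∏ fm i (u i)) * g (Φ u) = f u  a.e.
  have hprobU : IsProbabilityMeasure (μ.map U) := Measure.isProbabilityMeasure_map hU.aemeasurable
  have hlinf : ∫⁻ u, ENNReal.ofReal (f u) = 1 := by
    have h1 : (volume.withDensity fun x => ENNReal.ofReal (f x)) univ = 1 := by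
      rw [← hf]; exact measure_univ
    rwa [withDensity_apply _ MeasurableSet.univ, setLIntegral_univ] at h1
  have hwmeas : Measurable fun u : Fin n → ℝ => ∏ i, fm i (u i) := by
    exact Finset.measurable_prod _ fun i _ => ((hfm_cont i).measurable).comp (measurable_pi_apply i)
  have hkey : ∀ᵐ u ∂(volume : Measure (Fin n → ℝ)),
      f u = (∏ i, fm i (u i)) * g (Φ u) := by
    have hmeq : (volume : Measure (Fin n → ℝ)).withDensity (fun u => ENNReal.ofReal (f u))
        = volume.withDensity (fun u => ENNReal.ofReal ((∏ i, fm i (u i)) * g (Φ u))) := by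
      refine Measure.ext fun t ht => ?_
      rw [withDensity_apply _ ht, withDensity_apply _ ht]
      have hcv := lintegral_image_eq_lintegral_abs_det_fderiv_mul volume ht
        (fun x _ => (hΦderiv x).hasFDerivWithinAt) (hΦinj.injOn)
        (fun z => ENNReal.ofReal (g z))
      have himgmeas : MeasurableSet (Φ '' t) := hemb.measurableSet_image.2 ht
      have h2 : ∫⁻ z in Φ '' t, ENNReal.ofReal (g z) = ∫⁻ u in t, ENNReal.ofReal (f u) := by
        rw [← withDensity_apply _ himgmeas, hmapZ,
          Measure.map_apply hΦmeas himgmeas, preimage_image_eq t hΦinj, hf,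
          withDensity_apply _ ht]
      rw [← h2, hcv]
      apply setLIntegral_congr_fun ht
      intro u _
      beta_reduce
      rw [ENNReal.ofReal_mul (hw_pos u).le, hdet u, abs_of_pos (hw_pos u)]
    have h3 := (withDensity_eq_iff (hf_meas.ennreal_ofReal).aemeasurable
      ((hwmeas.mul (hg_meas.comp hΦmeas)).ennreal_ofReal).aemeasurable
      (by rw [hlinf]; exact ENNReal.one_ne_top)).1 hmeq
    filter_upwards [h3] with u hu
    have := (ENNReal.ofReal_eq_ofReal_iff (hf_nonneg u)
      (mul_nonneg (hw_pos u).le (hg_nonneg _))).1 hu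
    exact this
  -- step: ∫ g log g over the complement of the range of Φ vanishes
  have hg0 : g =ᵐ[volume.restrict (range Φ)ᶜ] 0 := by
    have hr : MeasurableSet (range Φ)ᶜ := hemb.measurableSet_range.compl
    have h0 : ∫⁻ z in (range Φ)ᶜ, ENNReal.ofReal (g z) = 0 := by
      rw [← withDensity_apply _ hr, ← hg, Measure.map_apply hZmeas hr]
      have : (fun ω i => F i (U ω i)) ⁻¹' (range Φ)ᶜ = ∅ := by
        ext ω
        simp only [mem_preimage, mem_compl_iff, mem_range, mem_empty_iff_false, iff_false,
          not_not]
        exact ⟨U ω, rfl⟩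
      rw [this, measure_empty]
    have h1 := (lintegral_eq_zero_iff (hg_meas.ennreal_ofReal)).1 h0
    filter_upwards [h1] with z hz
    simp only [Pi.zero_apply, ENNReal.ofReal_eq_zero] at hz
    exact le_antisymm hz (hg_nonneg z)
  have hsplit : ∫ z, g z * Real.log (g z) = ∫ z in range Φ, g z * Real.log (g z) := by
    rw [← integral_add_compl hemb.measurableSet_range h_int_g]
    have hzero : ∫ z in (range Φ)ᶜ, g z * Real.log (g z) = 0 := by
      apply integral_eq_zero_of_ae
      filter_upwards [hg0] with z hz
      simp [hz]
    rw [hzero, add_zero]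
  -- change of variables for the main integral
  have himg : ∫ z in range Φ, g z * Real.log (g z)
      = ∫ u, |(D u).det| • (g (Φ u) * Real.log (g (Φ u))) := by
    rw [← image_univ, integral_image_eq_integral_abs_det_fderiv_smul volume MeasurableSet.univ
      (fun x _ => (hΦderiv x).hasFDerivWithinAt) (hΦinj.injOn) _, Measure.restrict_univ]
  -- marginal entropies in terms of the joint density
  have hmarg : ∀ i, Integrable (fun u => f u * Real.log (fm i (u i))) ∧
      ∫ u, f u * Real.log (fm i (u i)) = ∫ x, fm i x * Real.log (fm i x) := by
    intro i
    have hLcont : Continuous fun x => Real.log (fm i x) :=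
      (hfm_cont i).log fun x => (hfm_pos i x).ne'
    have hwd : (volume.withDensity fun x => ENNReal.ofReal (fm i x))
        = (volume.withDensity fun u => ENNReal.ofReal (f u)).map (fun u => u i) := by
      rw [← hf, ← hmap_i i, hfm i]
    -- integrability of log fm i wrt its own density measure
    have hInt1 : Integrable (fun x => Real.log (fm i x))
        (volume.withDensity fun x => ENNReal.ofReal (fm i x)) := by
      rw [integrable_withDensity_iff (hfm_cont i).measurable.ennreal_ofReal
        (Filter.Eventually.of_forall fun x => ENNReal.ofReal_lt_top)]
      have : (fun x => Real.log (fm i x) * (ENNReal.ofReal (fm i x)).toReal)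
          = fun x => fm i x * Real.log (fm i x) := by
        funext x
        rw [ENNReal.toReal_ofReal (hfm_pos i x).le, mul_comm]
      rw [this]
      exact h_int_fm i
    -- same integral, expressed with the density
    have hInt1' : ∫ x, Real.log (fm i x) ∂(volume.withDensity fun x => ENNReal.ofReal (fm i x))
        = ∫ x, fm i x * Real.log (fm i x) := by
      have hnn : (fun x => ENNReal.ofReal (fm i x))
          = fun x => ((fun x => (fm i x).toNNReal) x : ENNReal) := rfl
      rw [hnn, integral_withDensity_eq_integral_smul
        ((hfm_cont i).measurable.real_toNNReal) _]
      congr 1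
      funext x
      rw [NNReal.smul_def, smul_eq_mul, Real.coe_toNNReal _ (hfm_pos i x).le]
    -- transfer along the map
    have hasm : AEStronglyMeasurable (fun x => Real.log (fm i x))
        ((volume.withDensity fun u => ENNReal.ofReal (f u)).map (fun u => u i)) :=
      hLcont.aestronglyMeasurable
    have hInt2 : Integrable (fun u : Fin n → ℝ => Real.log (fm i (u i)))
        (volume.withDensity fun u => ENNReal.ofReal (f u)) := by
      have := hInt1
      rw [hwd] at this
      exact (integrable_map_measure hasm (measurable_pi_apply i).aemeasurable).1 this
    have hInt2' : ∫ u, Real.log (fm i (u i)) ∂(volume.withDensity fun u => ENNReal.ofReal (f u))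
        = ∫ x, fm i x * Real.log (fm i x) := by
      rw [← hInt1', hwd, integral_map (measurable_pi_apply i).aemeasurable hasm]
    constructor
    · have h4 := hInt2
      rw [integrable_withDensity_iff hf_meas.ennreal_ofReal
        (Filter.Eventually.of_forall fun x => ENNReal.ofReal_lt_top)] at h4
      have : (fun u : Fin n → ℝ => Real.log (fm i (u i)) * (ENNReal.ofReal (f u)).toReal)
          = fun u => f u * Real.log (fm i (u i)) := by
        funext u
        rw [ENNReal.toReal_ofReal (hf_nonneg u), mul_comm]
      rwa [this] at h4
    · rw [← hInt2']
      have hnn : (fun u : Fin n → ℝ => ENNReal.ofReal (f u))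
          = fun u => ((fun u => (f u).toNNReal) u : ENNReal) := rfl
      rw [hnn, integral_withDensity_eq_integral_smul (hf_meas.real_toNNReal) _]
      congr 1
      funext u
      rw [NNReal.smul_def, smul_eq_mul, Real.coe_toNNReal _ (hf_nonneg u)]
  -- pointwise a.e. identity for the transformed integrand
  have hae : ∀ᵐ u ∂(volume : Measure (Fin n → ℝ)),
      |(D u).det| • (g (Φ u) * Real.log (g (Φ u)))
        = f u * Real.log (f u) - ∑ i, f u * Real.log (fm i (u i)) := by
    filter_upwards [hkey] with u hu
    rw [hdet u, abs_of_pos (hw_pos u), smul_eq_mul]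
    set w := ∏ i, fm i (u i) with hwdef
    have hwne : w ≠ 0 := (hw_pos u).ne'
    have hlogw : Real.log w = ∑ i, Real.log (fm i (u i)) :=
      Real.log_prod fun i _ => (hfm_pos i (u i)).ne'
    by_cases hfu : f u = 0
    · have hgΦ : g (Φ u) = 0 := by
        have : w * g (Φ u) = 0 := by rw [← hu, hfu]
        rcases mul_eq_zero.1 this with h | h
        · exact absurd h hwne
        · exact h
      simp [hfu, hgΦ]
    · have hgΦ : g (Φ u) = f u / w := by
        field_simp
        linarith [hu]
      rw [hgΦ, Real.log_div hfu hwne, hlogw, ← Finset.mul_sum]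
      field_simp
  -- final computation
  have hint_sum : Integrable (fun u => ∑ i, f u * Real.log (fm i (u i))) :=
    integrable_finset_sum _ fun i _ => (hmarg i).1
  calc ∫ z, g z * Real.log (g z)
      = ∫ u, |(D u).det| • (g (Φ u) * Real.log (g (Φ u))) := by rw [hsplit, himg]
    _ = ∫ u, (f u * Real.log (f u) - ∑ i, f u * Real.log (fm i (u i))) :=
        integral_congr_ae hae
    _ = (∫ u, f u * Real.log (f u)) - ∫ u, ∑ i, f u * Real.log (fm i (u i)) :=
        integral_sub h_int_f hint_sum
    _ = (∫ u, f u * Real.log (f u)) - ∑ i, ∫ u, f u * Real.log (fm i (u i)) := by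
        rw [integral_finset_sum _ fun i _ => (hmarg i).1]
    _ = (∫ u, f u * Real.log (f u)) - ∑ i, ∫ x, fm i x * Real.log (fm i x) := by
        congr 1
        exact Finset.sum_congr rfl fun i _ => (hmarg i).2



open MeasureTheory

/-- **Theorem 1 of the paper, noiseless concrete form.**  Let `U` and `V` be two random
vectors in `ℝⁿ` (e.g. two linear transforms of the same input), each with a joint
density whose marginals are continuous and strictly positive, and let `Z`, `Z'` be
obtained by applying to each component the CDF of that component.  Under integrability
of all the entropy integrands involved, `I(U) ≤ I(V)` holds if and only if
`h(Z) ≥ h(Z')`: minimizing the multi-information of the outputs is equivalent to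
maximizing the differential entropy of the CDF-transformed outputs. -/
theorem multiInformation_le_iff_entropy_ge_of_cdf_transform
    {Ω : Type*} [MeasurableSpace Ω] (μ : Measure Ω) [IsProbabilityMeasure μ]
    {n : ℕ} (U V : Ω → Fin n → ℝ) (hU : Measurable U) (hV : Measurable V)
    -- joint and marginal densities of U
    (f : (Fin n → ℝ) → ℝ) (hf_meas : Measurable f) (hf_nonneg : ∀ x, 0 ≤ f x)
    (hf : μ.map U = volume.withDensity (fun x => ENNReal.ofReal (f x)))
    (fm : Fin n → ℝ → ℝ) (hfm_cont : ∀ i, Continuous (fm i))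
    (hfm_pos : ∀ i x, 0 < fm i x)
    (hfm : ∀ i, μ.map (fun ω => U ω i) =
      volume.withDensity (fun x => ENNReal.ofReal (fm i x)))
    -- joint and marginal densities of V
    (f' : (Fin n → ℝ) → ℝ) (hf'_meas : Measurable f') (hf'_nonneg : ∀ x, 0 ≤ f' x)
    (hf' : μ.map V = volume.withDensity (fun x => ENNReal.ofReal (f' x)))
    (fm' : Fin n → ℝ → ℝ) (hfm'_cont : ∀ i, Continuous (fm' i))
    (hfm'_pos : ∀ i x, 0 < fm' i x)
    (hfm' : ∀ i, μ.map (fun ω => V ω i) =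
      volume.withDensity (fun x => ENNReal.ofReal (fm' i x)))
    -- the component-wise CDFs
    (F : Fin n → ℝ → ℝ) (hF : ∀ i t, F i t = (μ {ω | U ω i ≤ t}).toReal)
    (F' : Fin n → ℝ → ℝ) (hF' : ∀ i t, F' i t = (μ {ω | V ω i ≤ t}).toReal)
    -- joint densities of the CDF-transformed outputs Z and Z'
    (g : (Fin n → ℝ) → ℝ) (hg_meas : Measurable g) (hg_nonneg : ∀ z, 0 ≤ g z)
    (hg : μ.map (fun ω i => F i (U ω i)) =
      volume.withDensity (fun z => ENNReal.ofReal (g z)))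
    (g' : (Fin n → ℝ) → ℝ) (hg'_meas : Measurable g') (hg'_nonneg : ∀ z, 0 ≤ g' z)
    (hg' : μ.map (fun ω i => F' i (V ω i)) =
      volume.withDensity (fun z => ENNReal.ofReal (g' z)))
    -- integrability of all the entropy integrands involved
    (h_int_f : Integrable (fun u => f u * Real.log (f u)))
    (h_int_fm : ∀ i, Integrable (fun x => fm i x * Real.log (fm i x)))
    (h_int_f' : Integrable (fun u => f' u * Real.log (f' u)))
    (h_int_fm' : ∀ i, Integrable (fun x => fm' i x * Real.log (fm' i x)))
    (h_int_g : Integrable (fun z => g z * Real.log (g z)))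
    (h_int_g' : Integrable (fun z => g' z * Real.log (g' z))) :
    ((∑ i, -∫ x, fm i x * Real.log (fm i x)) - (-∫ u, f u * Real.log (f u)) ≤
        (∑ i, -∫ x, fm' i x * Real.log (fm' i x)) - (-∫ u, f' u * Real.log (f' u))) ↔
      ((-∫ z, g' z * Real.log (g' z)) ≤ (-∫ z, g z * Real.log (g z))) := by

  have hA := entropy_cdf_transform_eq μ U hU f hf_meas hf_nonneg hf fm hfm_cont hfm_pos hfm
    F hF g hg_meas hg_nonneg hg h_int_f h_int_fm h_int_g
  have hB := entropy_cdf_transform_eq μ V hV f' hf'_meas hf'_nonneg hf' fm' hfm'_cont hfm'_pos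
    hfm' F' hF' g' hg'_meas hg'_nonneg hg' h_int_f' h_int_fm' h_int_g'
  have e1 : (∑ i, -∫ x, fm i x * Real.log (fm i x)) - (-∫ u, f u * Real.log (f u))
      = ∫ z, g z * Real.log (g z) := by
    rw [hA]; rw [Finset.sum_neg_distrib]; ring
  have e2 : (∑ i, -∫ x, fm' i x * Real.log (fm' i x)) - (-∫ u, f' u * Real.log (f' u))
      = ∫ z, g' z * Real.log (g' z) := by
    rw [hB]; rw [Finset.sum_neg_distrib]; ring
  rw [e1, e2]
  constructor
  · intro h; exact neg_le_neg h
  · intro h; exact le_of_neg_le_neg h
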